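/- For all integers s, u, the cokernel of the 3×3 integer matrix A = [[0, 1 − u, 0], [0, 0, 1 − u], [−1, 1 − 2s + u, s(1 − s + u) − u²]], i.e. the quotient of ℤ³ by the ℤ-span of the columns of A, is isomorphic as an abelian group to (ℤ/(1 − u)ℤ) × (ℤ/(1 − u)ℤ); equivalently, the Smith normal form of A is diag(1, 1 − u, 1 − u). (Paper: Lemma 5.6, case (1) — the degree-4 relation matrix for the family (1) of Corollary 4.10, giving the stable orbifold cohomology group ℤ_{1−u}² of the singular 2-sphere.) -/
import Mathlib


/-- **Lemma 5.6, case (1).** For all integers `s, u`, the cokernel of the degree-4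
relation matrix `[[0, 1 − u, 0], [0, 0, 1 − u], [−1, 1 − 2s + u, s(1 − s + u) − u²]]` is
isomorphic as an abelian group to `ℤ/(1 − u)ℤ × ℤ/(1 − u)ℤ`; equivalently, the Smith
normal form of the matrix is `diag(1, 1 − u, 1 − u)`. -/
theorem cokernel_case_one (s u : ℤ) :
    Nonempty
      (((Fin 3 → ℤ) ⧸ LinearMap.range (Matrix.mulVecLin
          !![0, 1 - u, 0;
             0, 0, 1 - u;
             -1, 1 - 2 * s + u, s * (1 - s + u) - u ^ 2])) ≃+
        (ZMod (1 - u).natAbs × ZMod (1 - u).natAbs)) := by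
  set n := (1 - u).natAbs with hn
  set A := !![(0 : ℤ), 1 - u, 0;
             0, 0, 1 - u;
             -1, 1 - 2 * s + u, s * (1 - s + u) - u ^ 2] with hA
  let φ : (Fin 3 → ℤ) →ₗ[ℤ] ZMod n × ZMod n :=
    { toFun := fun v => ((v 0 : ZMod n), (v 1 : ZMod n))
      map_add' := by intro x y; simp [Prod.ext_iff]
      map_smul' := by intro c x; simp [Prod.ext_iff] }
  have hsurj : Function.Surjective φ := by
    rintro ⟨a, b⟩
    obtain ⟨a', rfl⟩ := ZMod.intCast_surjective a
    obtain ⟨b', rfl⟩ := ZMod.intCast_surjective b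
    exact ⟨![a', b', 0], rfl⟩
  have hker : LinearMap.ker φ = LinearMap.range A.mulVecLin := by
    ext v
    simp only [LinearMap.mem_ker, LinearMap.mem_range]
    constructor
    · intro h
      have hpair : ((v 0 : ZMod n) = 0) ∧ ((v 1 : ZMod n) = 0) := by
        have := congrArg Prod.fst h
        have := congrArg Prod.snd h
        exact ⟨congrArg Prod.fst h, congrArg Prod.snd h⟩
      have h0 : (1 - u) ∣ v 0 := by
        rw [← Int.natAbs_dvd, ← hn]
        exact_mod_cast (ZMod.intCast_zmod_eq_zero_iff_dvd _ _).mp hpair.1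
      have h1 : (1 - u) ∣ v 1 := by
        rw [← Int.natAbs_dvd, ← hn]
        exact_mod_cast (ZMod.intCast_zmod_eq_zero_iff_dvd _ _).mp hpair.2
      obtain ⟨a, ha⟩ := h0
      obtain ⟨b, hb⟩ := h1
      refine ⟨![a * (1 - 2 * s + u) + b * (s * (1 - s + u) - u ^ 2) - v 2, a, b], ?_⟩
      funext i
      fin_cases i <;>
        simp [hA, Matrix.mulVec, dotProduct, Fin.sum_univ_three, ha, hb] <;> ring
    · rintro ⟨x, rfl⟩
      have e0 : (A.mulVecLin x) 0 = (1 - u) * x 1 := by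
        simp [hA, Matrix.mulVec, dotProduct, Fin.sum_univ_three]
      have e1 : (A.mulVecLin x) 1 = (1 - u) * x 2 := by
        simp [hA, Matrix.mulVec, dotProduct, Fin.sum_univ_three]
      have d0 : ((A.mulVecLin x) 0 : ZMod n) = 0 := by
        rw [e0]
        exact (ZMod.intCast_zmod_eq_zero_iff_dvd _ _).mpr
          (by rw [hn]; exact Int.natAbs_dvd.mpr ⟨x 1, rfl⟩)
      have d1 : ((A.mulVecLin x) 1 : ZMod n) = 0 := by
        rw [e1]
        exact (ZMod.intCast_zmod_eq_zero_iff_dvd _ _).mpr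
          (by rw [hn]; exact Int.natAbs_dvd.mpr ⟨x 2, rfl⟩)
      exact Prod.ext d0 d1
  rw [← hker]
  exact ⟨(φ.quotKerEquivOfSurjective hsurj).toAddEquiv⟩
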